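/- Let H be a real inner product space and h: ℝ → H a map satisfying ⟨h(s),h(t)⟩ = 1/cosh(t−s) for all s,t ∈ ℝ (in particular each h(t) is a unit vector). Then for all real numbers s₀, x, y with x ≠ s₀ and y ≠ s₀, one has |⟨p_{h(s₀)}(h(x)), p_{h(s₀)}(h(y))⟩| = 1/cosh(x−y); in particular, the set {h(t) : t ∈ ℝ} is projection-invariant. -/

import Mathlib

open RealInnerProductSpace

/-- The spherical projection of `y` to the hyperplane orthogonal to the unit vector `s₀`:
`p_{s₀}(y) = (y − ⟨s₀,y⟩ s₀)/√(1 − ⟨s₀,y⟩²)`. -/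
noncomputable def sphProj {H : Type*} [NormedAddCommGroup H] [InnerProductSpace ℝ H]
    (s₀ y : H) : H :=
  (Real.sqrt (1 - ⟪s₀, y⟫ ^ 2))⁻¹ • (y - ⟪s₀, y⟫ • s₀)

/-- A set `S` of unit vectors in a real inner product space is *projection-invariant*
if for every `s₀ ∈ S` and all `x, y ∈ S` with `|⟨x,s₀⟩| < 1` and `|⟨y,s₀⟩| < 1` one has
`|⟨p_{s₀}(x), p_{s₀}(y)⟩| = |⟨x,y⟩|`. -/
def ProjInvariant {H : Type*} [NormedAddCommGroup H] [InnerProductSpace ℝ H]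
    (S : Set H) : Prop :=
  ∀ s₀ ∈ S, ∀ x ∈ S, ∀ y ∈ S, |⟪x, s₀⟫| < 1 → |⟪y, s₀⟫| < 1 →
    |⟪sphProj s₀ x, sphProj s₀ y⟫| = |⟪x, y⟫|

lemma sphProj_inner {H : Type*} [NormedAddCommGroup H] [InnerProductSpace ℝ H]
    (s₀ x y : H) (hs : ⟪s₀, s₀⟫ = 1) :
    ⟪sphProj s₀ x, sphProj s₀ y⟫ =
      (Real.sqrt (1 - ⟪s₀, x⟫ ^ 2))⁻¹ * ((Real.sqrt (1 - ⟪s₀, y⟫ ^ 2))⁻¹ *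
        (⟪x, y⟫ - ⟪s₀, x⟫ * ⟪s₀, y⟫)) := by
  simp only [sphProj, real_inner_smul_left, real_inner_smul_right, inner_sub_left,
    inner_sub_right, hs, real_inner_comm x s₀]
  ring

lemma key_real (u v : ℝ) (hu : u ≠ 0) (hv : v ≠ 0) :
    |(Real.sqrt (1 - (1 / Real.cosh u) ^ 2))⁻¹ * ((Real.sqrt (1 - (1 / Real.cosh v) ^ 2))⁻¹ *
      (1 / Real.cosh (v - u) - (1 / Real.cosh u) * (1 / Real.cosh v)))| =
      1 / Real.cosh (v - u) := by
  have hcu := Real.cosh_pos u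
  have hcv := Real.cosh_pos v
  have hcw := Real.cosh_pos (v - u)
  have hsu : Real.sinh u ≠ 0 := by simpa using hu
  have hsv : Real.sinh v ≠ 0 := by simpa using hv
  have h1 : ∀ t : ℝ, 1 - (1 / Real.cosh t) ^ 2 = (Real.sinh t / Real.cosh t) ^ 2 := by
    intro t
    have := Real.cosh_sq_sub_sinh_sq t
    have hc := (Real.cosh_pos t).ne'
    field_simp
    nlinarith [this]
  rw [h1 u, h1 v, Real.sqrt_sq_eq_abs, Real.sqrt_sq_eq_abs]
  have hw : Real.cosh (v - u) = Real.cosh v * Real.cosh u - Real.sinh v * Real.sinh u :=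
    Real.cosh_sub v u
  have hne : Real.cosh v * Real.cosh u - Real.sinh v * Real.sinh u ≠ 0 := hw ▸ hcw.ne'
  have key : 1 / Real.cosh (v - u) - (1 / Real.cosh u) * (1 / Real.cosh v) =
      Real.sinh u * Real.sinh v / (Real.cosh (v - u) * Real.cosh u * Real.cosh v) := by
    rw [hw]
    field_simp
    ring
  have hau : |Real.sinh u| ≠ 0 := abs_ne_zero.mpr hsu
  have hav : |Real.sinh v| ≠ 0 := abs_ne_zero.mpr hsv
  have hprod : (|Real.sinh u / Real.cosh u|)⁻¹ * ((|Real.sinh v / Real.cosh v|)⁻¹ *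
      (1 / Real.cosh (v - u) - (1 / Real.cosh u) * (1 / Real.cosh v))) =
      Real.sinh u * Real.sinh v / (|Real.sinh u| * |Real.sinh v|) * (1 / Real.cosh (v - u)) := by
    rw [key, abs_div, abs_div, abs_of_pos hcu, abs_of_pos hcv]
    field_simp
  rw [hprod, abs_mul, abs_div, abs_mul, abs_mul, abs_abs, abs_abs, div_self (by positivity),
    one_mul, abs_of_pos (by positivity)]

/-- The helix `h : ℝ → H` with `⟨h(s),h(t)⟩ = 1/cosh(t−s)` does not change the
(absolute values of) inner products under spherical projections: for `x ≠ s₀` and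
`y ≠ s₀`, `|⟨p_{h(s₀)}(h(x)), p_{h(s₀)}(h(y))⟩| = 1/cosh(x−y)`; in particular, the
set `{h(t) : t ∈ ℝ}` is projection-invariant. -/
theorem stmt9 {H : Type*} [NormedAddCommGroup H] [InnerProductSpace ℝ H]
    (h : ℝ → H) (hh : ∀ s t : ℝ, ⟪h s, h t⟫ = 1 / Real.cosh (t - s)) :
    (∀ s₀ x y : ℝ, x ≠ s₀ → y ≠ s₀ →
      |⟪sphProj (h s₀) (h x), sphProj (h s₀) (h y)⟫| = 1 / Real.cosh (x - y)) ∧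
    ProjInvariant (Set.range h) := by
  have main : ∀ s₀ x y : ℝ, x ≠ s₀ → y ≠ s₀ →
      |⟪sphProj (h s₀) (h x), sphProj (h s₀) (h y)⟫| = 1 / Real.cosh (x - y) := by
    intro s₀ x y hx hy
    have hs : ⟪h s₀, h s₀⟫ = 1 := by rw [hh]; simp
    rw [sphProj_inner _ _ _ hs, hh, hh, hh]
    have hux : x - s₀ ≠ 0 := sub_ne_zero.mpr hx
    have huy : y - s₀ ≠ 0 := sub_ne_zero.mpr hy
    have := key_real (x - s₀) (y - s₀) hux huy
    have e : y - s₀ - (x - s₀) = y - x := by ring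
    rw [e] at this
    rw [this, Real.cosh_sub, Real.cosh_sub x y]
    ring_nf
  refine ⟨main, ?_⟩
  rintro _ ⟨a, rfl⟩ _ ⟨b, rfl⟩ _ ⟨c, rfl⟩ hb hc
  have hba : b ≠ a := by
    rintro rfl
    rw [hh] at hb
    simp at hb
  have hca : c ≠ a := by
    rintro rfl
    rw [hh] at hc
    simp at hc
  rw [main a b c hba hca, hh]
  rw [abs_of_pos (by positivity), Real.cosh_sub, Real.cosh_sub c b]
  ring_nf
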